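/- arXiv:2402.12181 — 3 statements merged into one kernel-verified Lean document; each statement's English description precedes it below -/
import Mathlib

section
/- Let A be a finite nonempty type, let q, p, g : A → ℝ be probability mass functions that are everywhere positive on A, and set c = max_{a∈A} |log p(a) − log g(a)|. Then |D_KL(q‖g) − D_KL(p‖g)| ≤ D_KL(q‖p) + c·√(2·D_KL(q‖p)). -/
/-- Kullback–Leibler divergence (natural log) between two PMFs on a finite type. -/
noncomputable def KLdiv {A : Type*} [Fintype A] (q p : A → ℝ) : ℝ :=
  ∑ a, q a * Real.log (q a / p a)

/-- Pointwise key inequality: for `t > 0`, `3(t-1)^2 ≤ 2(t+2)(t log t - t + 1)`. -/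
lemma key_ineq {t : ℝ} (ht : 0 < t) :
    3 * (t - 1) ^ 2 ≤ 2 * (t + 2) * (t * Real.log t - t + 1) := by
  set f : ℝ → ℝ := fun t => 2 * (t + 2) * (t * Real.log t - t + 1) - 3 * (t - 1) ^ 2 with hf
  set f1 : ℝ → ℝ := fun t =>
    2 * (t * Real.log t - t + 1) + 2 * (t + 2) * Real.log t - 6 * (t - 1) with hf1
  have hderiv : ∀ x : ℝ, 0 < x → HasDerivAt f (f1 x) x := by
    intro x hx
    have h1 : HasDerivAt (fun t : ℝ => t * Real.log t) (Real.log x + 1) x :=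
      Real.hasDerivAt_mul_log hx.ne'
    have h2 : HasDerivAt (fun t : ℝ => t * Real.log t - t + 1) (Real.log x) x := by
      simpa using (h1.sub (hasDerivAt_id x)).add_const 1
    have h3 : HasDerivAt (fun t : ℝ => 2 * (t + 2)) 2 x := by
      simpa using ((hasDerivAt_id x).add_const 2).const_mul 2
    have h4 : HasDerivAt (fun t : ℝ => 2 * (t + 2) * (t * Real.log t - t + 1))
        (2 * (x * Real.log x - x + 1) + 2 * (x + 2) * Real.log x) x := by
      have := h3.mul h2
      exact this
    have h5 : HasDerivAt (fun t : ℝ => 3 * (t - 1) ^ 2) (6 * (x - 1)) x := by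
      have h := (((hasDerivAt_id x).sub_const 1).pow 2).const_mul 3
      refine h.congr_deriv ?_
      simp only [id_eq]
      push_cast
      ring
    exact h4.sub h5
  have hderiv1 : ∀ x : ℝ, 0 < x → HasDerivAt f1 (4 * Real.log x + 4 / x - 4) x := by
    intro x hx
    have h1 : HasDerivAt (fun t : ℝ => t * Real.log t) (Real.log x + 1) x :=
      Real.hasDerivAt_mul_log hx.ne'
    have h2 : HasDerivAt (fun t : ℝ => t * Real.log t - t + 1) (Real.log x) x := by
      simpa using (h1.sub (hasDerivAt_id x)).add_const 1
    have h3 : HasDerivAt (fun t : ℝ => 2 * (t + 2)) 2 x := by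
      simpa using ((hasDerivAt_id x).add_const 2).const_mul 2
    have hlog : HasDerivAt Real.log x⁻¹ x := Real.hasDerivAt_log hx.ne'
    have h4 : HasDerivAt (fun t : ℝ => 2 * (t + 2) * Real.log t)
        (2 * Real.log x + 2 * (x + 2) * x⁻¹) x := h3.mul hlog
    have h5 : HasDerivAt (fun t : ℝ => 6 * (t - 1)) 6 x := by
      simpa using ((hasDerivAt_id x).sub_const 1).const_mul 6
    have := ((h2.const_mul 2).add h4).sub h5
    refine this.congr_deriv ?_
    field_simp
    ring
  -- f1' ≥ 0 on (0,∞)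
  have hf1'nonneg : ∀ x : ℝ, 0 < x → 0 ≤ 4 * Real.log x + 4 / x - 4 := by
    intro x hx
    have h := Real.one_sub_inv_le_log_of_pos hx
    rw [inv_eq_one_div] at h
    have e : 4 / x = 4 * (1 / x) := by ring
    linarith
  have hf1one : f1 1 = 0 := by simp [hf1]
  have hfone : f 1 = 0 := by norm_num [hf]
  -- f1 monotone on Ioi 0
  have hf1mono : MonotoneOn f1 (Set.Ioi (0:ℝ)) := by
    apply monotoneOn_of_deriv_nonneg (convex_Ioi 0)
    · intro x hx
      exact (hderiv1 x hx).continuousAt.continuousWithinAt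
    · intro x hx
      rw [interior_Ioi] at hx
      exact (hderiv1 x hx).differentiableAt.differentiableWithinAt
    · intro x hx
      rw [interior_Ioi] at hx
      rw [(hderiv1 x hx).deriv]
      exact hf1'nonneg x hx
  rcases le_total 1 t with h1t | ht1
  · -- t ≥ 1 : f monotone on [1, ∞)
    have hmono : MonotoneOn f (Set.Ici (1:ℝ)) := by
      apply monotoneOn_of_deriv_nonneg (convex_Ici 1)
      · intro x hx
        exact (hderiv x (lt_of_lt_of_le one_pos hx)).continuousAt.continuousWithinAt
      · intro x hx
        rw [interior_Ici] at hx
        exact (hderiv x (lt_trans one_pos hx)).differentiableAt.differentiableWithinAt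
      · intro x hx
        rw [interior_Ici] at hx
        have hx0 : (0:ℝ) < x := lt_trans one_pos hx
        rw [(hderiv x hx0).deriv]
        have := hf1mono (Set.mem_Ioi.2 one_pos) (Set.mem_Ioi.2 hx0) hx.le
        rw [hf1one] at this
        exact this
    have := hmono (Set.mem_Ici.2 le_rfl) (Set.mem_Ici.2 h1t) h1t
    rw [hfone] at this
    simpa [hf] using sub_nonneg.1 (by simpa [hf] using this)
  · -- t ≤ 1 : f antitone on (0, 1]
    have hanti : AntitoneOn f (Set.Ioc (0:ℝ) 1) := by
      apply antitoneOn_of_deriv_nonpos (convex_Ioc 0 1)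
      · intro x hx
        exact (hderiv x hx.1).continuousAt.continuousWithinAt
      · intro x hx
        rw [interior_Ioc] at hx
        exact (hderiv x hx.1).differentiableAt.differentiableWithinAt
      · intro x hx
        rw [interior_Ioc] at hx
        rw [(hderiv x hx.1).deriv]
        have := hf1mono (Set.mem_Ioi.2 hx.1) (Set.mem_Ioi.2 one_pos) hx.2.le
        rw [hf1one] at this
        exact this
    have := hanti (Set.mem_Ioc.2 ⟨ht, ht1⟩) (Set.mem_Ioc.2 ⟨one_pos, le_rfl⟩) ht1
    rw [hfone] at this
    simpa [hf] using sub_nonneg.1 (by simpa [hf] using this)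

/-- Each KL summand with linear correction is nonnegative. -/
lemma kl_term_nonneg {x y : ℝ} (hx : 0 < x) (hy : 0 < y) :
    0 ≤ x * Real.log (x / y) - x + y := by
  have h : Real.log (y / x) ≤ y / x - 1 := Real.log_le_sub_one_of_pos (div_pos hy hx)
  have hxy : Real.log (x / y) = - Real.log (y / x) := by
    rw [← Real.log_inv]
    congr 1
    field_simp
  have hmul : x * Real.log (y / x) ≤ x * (y / x - 1) :=
    mul_le_mul_of_nonneg_left h hx.le
  have e : x * (y / x - 1) = y - x := by field_simp
  rw [hxy]
  linarith

/-- Pinsker's inequality (L¹ form) for finite PMFs. -/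
lemma pinsker {A : Type*} [Fintype A] (q p : A → ℝ)
    (hq : ∀ a, 0 < q a) (hp : ∀ a, 0 < p a)
    (hqsum : ∑ a, q a = 1) (hpsum : ∑ a, p a = 1) :
    ∑ a, |q a - p a| ≤ Real.sqrt (2 * KLdiv q p) := by
  -- pointwise: 3(x-y)^2 ≤ 2(x+2y)(x log(x/y) - x + y)
  have hpoint : ∀ a, 3 * (q a - p a) ^ 2 ≤
      2 * (q a + 2 * p a) * (q a * Real.log (q a / p a) - q a + p a) := by
    intro a
    have ht : 0 < q a / p a := div_pos (hq a) (hp a)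
    have := key_ineq ht
    have hpa := hp a
    have h2 : 0 < (p a) ^ 2 := by positivity
    have := mul_le_mul_of_nonneg_left this (le_of_lt h2)
    calc 3 * (q a - p a) ^ 2
        = (p a)^2 * (3 * (q a / p a - 1) ^ 2) := by field_simp
      _ ≤ (p a)^2 * (2 * (q a / p a + 2) * (q a / p a * Real.log (q a / p a) - q a / p a + 1)) :=
          this
      _ = 2 * (q a + 2 * p a) * (q a * Real.log (q a / p a) - q a + p a) := by
          field_simp
  -- Cauchy–Schwarz setup
  set u : A → ℝ := fun a => Real.sqrt ((q a + 2 * p a) / 3) with hu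
  set v : A → ℝ := fun a => Real.sqrt (3 * (q a - p a) ^ 2 / (q a + 2 * p a)) with hv
  have hsumpos : ∀ a, 0 < q a + 2 * p a := fun a => by nlinarith [hq a, hp a]
  have huv : ∀ a, u a * v a = |q a - p a| := by
    intro a
    rw [hu, hv, ← Real.sqrt_mul (div_nonneg (hsumpos a).le (by norm_num))]
    have : (q a + 2 * p a) / 3 * (3 * (q a - p a) ^ 2 / (q a + 2 * p a))
        = (q a - p a) ^ 2 := by
      field_simp [(hsumpos a).ne']
    rw [this, Real.sqrt_sq_eq_abs]
  have hu2 : ∑ a, (u a)^2 = 1 := by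
    have : ∀ a, (u a)^2 = (q a + 2 * p a) / 3 := fun a =>
      Real.sq_sqrt (div_nonneg (hsumpos a).le (by norm_num))
    simp only [this]
    rw [← Finset.sum_div, Finset.sum_add_distrib, hqsum, ← Finset.mul_sum, hpsum]
    norm_num
  have hv2 : ∑ a, (v a)^2 ≤ 2 * KLdiv q p := by
    have hKL : KLdiv q p = ∑ a, (q a * Real.log (q a / p a) - q a + p a) := by
      unfold KLdiv
      rw [Finset.sum_add_distrib, Finset.sum_sub_distrib, hqsum, hpsum]
      ring
    have hterm : ∀ a, (v a)^2 ≤ 2 * (q a * Real.log (q a / p a) - q a + p a) := by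
      intro a
      have : (v a)^2 = 3 * (q a - p a) ^ 2 / (q a + 2 * p a) :=
        Real.sq_sqrt (div_nonneg (by positivity) (hsumpos a).le)
      rw [this, div_le_iff₀ (hsumpos a)]
      nlinarith [hpoint a]
    calc ∑ a, (v a)^2 ≤ ∑ a, 2 * (q a * Real.log (q a / p a) - q a + p a) :=
          Finset.sum_le_sum fun a _ => hterm a
      _ = 2 * KLdiv q p := by rw [hKL, Finset.mul_sum]
  have hcs := Finset.sum_mul_sq_le_sq_mul_sq Finset.univ u v
  rw [hu2, one_mul] at hcs
  have : (∑ a, |q a - p a|) ^ 2 ≤ 2 * KLdiv q p := by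
    calc (∑ a, |q a - p a|) ^ 2 = (∑ a, u a * v a) ^ 2 := by
          congr 1; exact Finset.sum_congr rfl fun a _ => (huv a).symm
      _ ≤ ∑ a, (v a)^2 := hcs
      _ ≤ 2 * KLdiv q p := hv2
  exact Real.le_sqrt_of_sq_le this

/-- For everywhere-positive PMFs `q, p, g` on a finite nonempty type,
with `c = max_a |log (p a) − log (g a)|`,
`|D_KL(q‖g) − D_KL(p‖g)| ≤ D_KL(q‖p) + c·√(2·D_KL(q‖p))`. -/
theorem stmt_5 {A : Type*} [Fintype A] [Nonempty A]
    (q p g : A → ℝ)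
    (hq : ∀ a, 0 < q a) (hp : ∀ a, 0 < p a) (hg : ∀ a, 0 < g a)
    (hqsum : ∑ a, q a = 1) (hpsum : ∑ a, p a = 1) (hgsum : ∑ a, g a = 1)
    (c : ℝ)
    (hc : c = Finset.univ.sup' Finset.univ_nonempty
                fun a => |Real.log (p a) - Real.log (g a)|) :
    |KLdiv q g - KLdiv p g| ≤ KLdiv q p + c * Real.sqrt (2 * KLdiv q p) := by
  -- decomposition
  have hdecomp : KLdiv q g - KLdiv p g
      = KLdiv q p + ∑ a, (q a - p a) * (Real.log (p a) - Real.log (g a)) := by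
    unfold KLdiv
    rw [← Finset.sum_sub_distrib, ← Finset.sum_add_distrib]
    apply Finset.sum_congr rfl
    intro a _
    rw [Real.log_div (hq a).ne' (hg a).ne', Real.log_div (hp a).ne' (hg a).ne',
      Real.log_div (hq a).ne' (hp a).ne']
    ring
  have hKLnonneg : 0 ≤ KLdiv q p := by
    have : KLdiv q p = ∑ a, (q a * Real.log (q a / p a) - q a + p a) := by
      unfold KLdiv
      rw [Finset.sum_add_distrib, Finset.sum_sub_distrib, hqsum, hpsum]
      ring
    rw [this]
    exact Finset.sum_nonneg fun a _ => kl_term_nonneg (hq a) (hp a)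
  have hcle : ∀ a : A, |Real.log (p a) - Real.log (g a)| ≤ c := by
    intro a
    rw [hc]
    exact Finset.le_sup' (fun a => |Real.log (p a) - Real.log (g a)|) (Finset.mem_univ a)
  have hcnonneg : 0 ≤ c := by
    obtain ⟨a⟩ := ‹Nonempty A›
    exact le_trans (abs_nonneg _) (hcle a)
  have hS : |∑ a, (q a - p a) * (Real.log (p a) - Real.log (g a))|
      ≤ c * Real.sqrt (2 * KLdiv q p) := by
    calc |∑ a, (q a - p a) * (Real.log (p a) - Real.log (g a))|
        ≤ ∑ a, |(q a - p a) * (Real.log (p a) - Real.log (g a))| :=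
          Finset.abs_sum_le_sum_abs _ _
      _ = ∑ a, |q a - p a| * |Real.log (p a) - Real.log (g a)| := by
          simp [abs_mul]
      _ ≤ ∑ a, |q a - p a| * c :=
          Finset.sum_le_sum fun a _ =>
            mul_le_mul_of_nonneg_left (hcle a) (abs_nonneg _)
      _ = c * ∑ a, |q a - p a| := by rw [← Finset.sum_mul]; ring
      _ ≤ c * Real.sqrt (2 * KLdiv q p) :=
          mul_le_mul_of_nonneg_left (pinsker q p hq hp hqsum hpsum) hcnonneg
  calc |KLdiv q g - KLdiv p g|
      = |KLdiv q p + ∑ a, (q a - p a) * (Real.log (p a) - Real.log (g a))| := by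
        rw [hdecomp]
    _ ≤ |KLdiv q p| + |∑ a, (q a - p a) * (Real.log (p a) - Real.log (g a))| :=
        abs_add_le _ _
    _ ≤ KLdiv q p + c * Real.sqrt (2 * KLdiv q p) := by
        rw [abs_of_nonneg hKLnonneg]
        exact add_le_add_right hS _
end

section
/- Let I and A be finite nonempty types, let P : I → ℝ be a probability mass function on I, and for each μ ∈ I let p_μ : A → ℝ be an everywhere-positive probability mass function on A. Let Q̄ : A → ℝ, γ ∈ ℝ, and α ≥ 0. For each μ ∈ I define y_μ(a) = γ·Q̄(a) − α·log p_μ(a), Y(μ) = Σ_{a∈A} p_μ(a)·y_μ(a), M(μ) = max_{a∈A} |y_μ(a)|, and D_{η,μ} = D_KL(p_η‖p_μ). Then the variance of Y satisfies Σ_{μ} P(μ)·(Y(μ) − Σ_{η} P(η)·Y(η))² ≤ Σ_{μ} P(μ)·( Σ_{η} P(η)·( M(μ)·√(2·D_{η,μ}) + α·D_{η,μ} ) )². -/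
private lemma aux_h_deriv {x : ℝ} (hx : 0 < x) :
    HasDerivAt (fun x : ℝ => (x+1) * Real.log x - 2*x + 2)
      (Real.log x + (x+1) * x⁻¹ - 2) x := by
  have h : HasDerivAt (fun x : ℝ => (x+1) * Real.log x - 2*x + 2)
      (1 * Real.log x + (x+1) * x⁻¹ - 2*1) x :=
    ((((hasDerivAt_id' (x := x)).add_const 1).mul (Real.hasDerivAt_log hx.ne')).sub
      ((hasDerivAt_id' (x := x)).const_mul 2)).add_const 2
  convert h using 1
  ring

private lemma aux_h_mono : MonotoneOn (fun x : ℝ => (x+1) * Real.log x - 2*x + 2) (Set.Ioi 0) := by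
  have hint : interior (Set.Ioi (0:ℝ)) = Set.Ioi 0 := isOpen_Ioi.interior_eq
  have hdiff : DifferentiableOn ℝ (fun x : ℝ => (x+1) * Real.log x - 2*x + 2) (Set.Ioi 0) :=
    fun z hz => (aux_h_deriv hz).differentiableAt.differentiableWithinAt
  apply monotoneOn_of_deriv_nonneg (convex_Ioi 0) hdiff.continuousOn
    (hdiff.mono interior_subset)
  rw [hint]
  intro x hx
  have hx0 : (0:ℝ) < x := hx
  rw [(aux_h_deriv hx0).deriv]
  have hlog : 1 - x⁻¹ ≤ Real.log x := by
    have := Real.log_le_sub_one_of_pos (x := x⁻¹) (inv_pos.2 hx0)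
    rw [Real.log_inv] at this
    linarith
  have h2 : (x+1) * x⁻¹ = 1 + x⁻¹ := by rw [add_mul, one_mul, mul_inv_cancel₀ hx0.ne']
  rw [h2]
  linarith

private lemma aux_h_sign {x : ℝ} (hx : 0 < x) :
    (1 ≤ x → 0 ≤ (x+1) * Real.log x - 2*x + 2) ∧
    (x ≤ 1 → (x+1) * Real.log x - 2*x + 2 ≤ 0) := by
  have h1 : ((1:ℝ)+1) * Real.log 1 - 2*1 + 2 = 0 := by simp
  constructor
  · intro hx1
    have := aux_h_mono (Set.mem_Ioi.2 one_pos) (Set.mem_Ioi.2 hx) hx1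
    simpa [h1] using this
  · intro hx1
    have := aux_h_mono (Set.mem_Ioi.2 hx) (Set.mem_Ioi.2 one_pos) hx1
    simpa [h1] using this

private lemma aux_g_nonneg {x : ℝ} (hx : 0 < x) :
    0 ≤ (2*x^2+4*x) * Real.log x - 5*x^2 + 4*x + 1 := by
  set g : ℝ → ℝ := fun x => (2*x^2+4*x) * Real.log x - 5*x^2 + 4*x + 1 with hg
  have hderiv : ∀ z : ℝ, 0 < z → HasDerivAt g
      ((2*(2*z^1)+4) * Real.log z + (2*z^2+4*z) * z⁻¹ - 5*(2*z^1) + 4*1) z := by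
    intro z hz
    exact ((((((hasDerivAt_pow 2 z).const_mul 2).add ((hasDerivAt_id' (x := z)).const_mul 4)).mul
      (Real.hasDerivAt_log hz.ne')).sub (((hasDerivAt_pow 2 z).const_mul 5))).add
      ((hasDerivAt_id' (x := z)).const_mul 4)).add_const 1 |>.congr_deriv (by simp only [Pi.add_apply]; push_cast; ring)
  have hderiv' : ∀ z : ℝ, 0 < z → deriv g z = 4 * ((z+1) * Real.log z - 2*z + 2) := by
    intro z hz
    rw [(hderiv z hz).deriv]
    have h2 : (2*z^2+4*z) * z⁻¹ = 2*z + 4 := by field_simp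
    rw [h2]; ring
  have hdiff : ∀ s : Set ℝ, s ⊆ Set.Ioi 0 → DifferentiableOn ℝ g s := by
    intro s hs z hz
    exact (hderiv z (hs hz)).differentiableAt.differentiableWithinAt
  have hg1 : g 1 = 0 := by norm_num [hg]
  rcases le_or_gt 1 x with hx1 | hx1
  · have hmono : MonotoneOn g (Set.Ici 1) := by
      have hsub : Set.Ici (1:ℝ) ⊆ Set.Ioi 0 := fun z hz => Set.mem_Ioi.2 (lt_of_lt_of_le one_pos (Set.mem_Ici.1 hz))
      apply monotoneOn_of_deriv_nonneg (convex_Ici 1) ((hdiff _ hsub).continuousOn)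
        ((hdiff _ hsub).mono interior_subset)
      rw [interior_Ici]
      intro z hz
      rw [hderiv' z (lt_trans one_pos hz)]
      have := (aux_h_sign (lt_trans one_pos hz)).1 (le_of_lt hz)
      linarith
    have := hmono (Set.mem_Ici.2 le_rfl) (Set.mem_Ici.2 hx1) hx1
    rw [hg1] at this; exact this
  · have hanti : AntitoneOn g (Set.Ioc 0 1) := by
      have hsub : Set.Ioc (0:ℝ) 1 ⊆ Set.Ioi 0 := fun z hz => hz.1
      apply antitoneOn_of_deriv_nonpos (convex_Ioc 0 1) ((hdiff _ hsub).continuousOn)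
        ((hdiff _ hsub).mono interior_subset)
      rw [interior_Ioc]
      intro z hz
      rw [hderiv' z hz.1]
      have := (aux_h_sign hz.1).2 (le_of_lt hz.2)
      linarith
    have := hanti (Set.mem_Ioc.2 ⟨hx, le_of_lt hx1⟩) (Set.mem_Ioc.2 ⟨one_pos, le_rfl⟩)
      (le_of_lt hx1)
    rw [hg1] at this; exact this

private lemma aux_pointwise {q p : ℝ} (hq : 0 < q) (hp : 0 < p) :
    3*(q-p)^2/(q+2*p) ≤ 2*(q*Real.log (q/p) - q + p) := by
  have hx : 0 < q/p := div_pos hq hp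
  have hg := aux_g_nonneg hx
  set L := Real.log (q/p) with hL
  have hid : p^2 * ((2*(q/p)^2+4*(q/p)) * L - 5*(q/p)^2 + 4*(q/p) + 1)
      = (2*q^2+4*p*q)*L - 5*q^2 + 4*p*q + p^2 := by
    field_simp
  have key : 0 ≤ (2*q^2+4*p*q)*L - 5*q^2 + 4*p*q + p^2 := by
    rw [← hid]; positivity
  rw [div_le_iff₀ (by linarith)]
  nlinarith [key]

/-- Pinsker's inequality (finite, elementary form). -/
private lemma aux_pinsker {A : Type*} [Fintype A] (q p : A → ℝ)
    (hq : ∀ a, 0 < q a) (hp : ∀ a, 0 < p a)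
    (hqs : ∑ a, q a = 1) (hps : ∑ a, p a = 1) :
    (∑ a, |q a - p a|)^2 ≤ 2 * KLdiv q p := by
  set w : A → ℝ := fun a => (q a + 2 * p a)/3 with hw
  have hwpos : ∀ a, 0 < w a := fun a => by have := hq a; have := hp a; positivity
  have hcs := Finset.sum_mul_sq_le_sq_mul_sq Finset.univ
    (fun a => Real.sqrt (w a)) (fun a => |q a - p a| / Real.sqrt (w a))
  have h1 : ∀ a : A, Real.sqrt (w a) * (|q a - p a| / Real.sqrt (w a)) = |q a - p a| := by
    intro a
    rw [mul_div_cancel₀ _ (Real.sqrt_ne_zero'.2 (hwpos a))]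
  have h2 : ∑ a, Real.sqrt (w a) ^ 2 = 1 := by
    have he : ∀ a : A, Real.sqrt (w a) ^ 2 = w a := fun a => Real.sq_sqrt (hwpos a).le
    simp only [he]
    simp only [hw]
    rw [← Finset.sum_div, Finset.sum_add_distrib, hqs, ← Finset.mul_sum, hps]
    norm_num
  have h3 : ∑ a, (|q a - p a| / Real.sqrt (w a)) ^ 2 ≤ 2 * KLdiv q p := by
    have heq : ∀ a : A, (|q a - p a| / Real.sqrt (w a)) ^ 2 = 3*(q a - p a)^2/(q a + 2*p a) := by
      intro a
      rw [div_pow, sq_abs, Real.sq_sqrt (hwpos a).le, hw]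
      rw [div_div_eq_mul_div]
      ring
    calc ∑ a, (|q a - p a| / Real.sqrt (w a)) ^ 2
        = ∑ a, 3*(q a - p a)^2/(q a + 2*p a) := by simp only [heq]
      _ ≤ ∑ a, 2*(q a * Real.log (q a / p a) - q a + p a) :=
          Finset.sum_le_sum (fun a _ => aux_pointwise (hq a) (hp a))
      _ = 2 * KLdiv q p := by
          have : ∑ a, 2*(q a * Real.log (q a / p a) - q a + p a)
              = 2 * (∑ a, q a * Real.log (q a / p a)) - 2 * (∑ a, q a)
                + 2 * (∑ a, p a) := by
            rw [Finset.mul_sum, Finset.mul_sum, Finset.mul_sum, ← Finset.sum_sub_distrib,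
              ← Finset.sum_add_distrib]
            exact Finset.sum_congr rfl (fun a _ => by ring)
          rw [this, hqs, hps, KLdiv]
          ring
  calc (∑ a, |q a - p a|)^2 = (∑ a, Real.sqrt (w a) * (|q a - p a| / Real.sqrt (w a)))^2 := by
        simp only [h1]
    _ ≤ (∑ a, Real.sqrt (w a) ^ 2) * ∑ a, (|q a - p a| / Real.sqrt (w a)) ^ 2 := hcs
    _ ≤ 2 * KLdiv q p := by rw [h2, one_mul]; exact h3

private lemma aux_KL_nonneg {A : Type*} [Fintype A] (q p : A → ℝ)
    (hq : ∀ a, 0 < q a) (hp : ∀ a, 0 < p a)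
    (hqs : ∑ a, q a = 1) (hps : ∑ a, p a = 1) : 0 ≤ KLdiv q p := by
  have := aux_pinsker q p hq hp hqs hps
  nlinarith [sq_nonneg (∑ a, |q a - p a|)]

private lemma aux_l1_le_sqrt {A : Type*} [Fintype A] (q p : A → ℝ)
    (hq : ∀ a, 0 < q a) (hp : ∀ a, 0 < p a)
    (hqs : ∑ a, q a = 1) (hps : ∑ a, p a = 1) :
    ∑ a, |q a - p a| ≤ Real.sqrt (2 * KLdiv q p) := by
  rw [Real.le_sqrt (Finset.sum_nonneg (fun a _ => abs_nonneg _))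
    (by linarith [aux_KL_nonneg q p hq hp hqs hps])]
  exact aux_pinsker q p hq hp hqs hps

/-- Proposition 3 of the paper, single-sample form: with
`y_μ a = γ·Q̄ a − α·log (p_μ a)`, `Y μ = ∑_a p_μ a · y_μ a`,
`M μ = max_a |y_μ a|` and `D_{η,μ} = D_KL(p_η‖p_μ)`, the variance of `Y` under
`P` is bounded by `∑_μ P μ · (∑_η P η · (M μ·√(2·D_{η,μ}) + α·D_{η,μ}))²`. -/
theorem stmt_8 {I A : Type*} [Fintype I] [Nonempty I] [Fintype A] [Nonempty A]
    (P : I → ℝ) (hP : ∀ μ, 0 ≤ P μ) (hPsum : ∑ μ, P μ = 1)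
    (p : I → A → ℝ) (hp : ∀ μ a, 0 < p μ a) (hpsum : ∀ μ, ∑ a, p μ a = 1)
    (Qbar : A → ℝ) (γ α : ℝ) (hα : 0 ≤ α)
    (y : I → A → ℝ) (Y M : I → ℝ) (D : I → I → ℝ)
    (hy : ∀ μ a, y μ a = γ * Qbar a - α * Real.log (p μ a))
    (hY : ∀ μ, Y μ = ∑ a, p μ a * y μ a)
    (hM : ∀ μ, M μ = Finset.univ.sup' Finset.univ_nonempty fun a => |y μ a|)
    (hD : ∀ η μ, D η μ = KLdiv (p η) (p μ)) :
    ∑ μ, P μ * (Y μ - ∑ η, P η * Y η) ^ 2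
      ≤ ∑ μ, P μ * (∑ η, P η * (M μ * Real.sqrt (2 * D η μ) + α * D η μ)) ^ 2 := by
  have hDnn : ∀ η μ, 0 ≤ D η μ := fun η μ => by
    rw [hD]
    exact aux_KL_nonneg _ _ (hp η) (hp μ) (hpsum η) (hpsum μ)
  have hMabs : ∀ μ a, |y μ a| ≤ M μ := fun μ a => by
    rw [hM]; exact Finset.le_sup' (fun a => |y μ a|) (Finset.mem_univ a)
  have hMnn : ∀ μ, 0 ≤ M μ := fun μ =>
    le_trans (abs_nonneg _) (hMabs μ (Classical.arbitrary A))
  -- key bound on |Y μ - Y η|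
  have hkey : ∀ μ η, |Y μ - Y η| ≤ M μ * Real.sqrt (2 * D η μ) + α * D η μ := by
    intro μ η
    have hYη : Y η = (∑ a, p η a * y μ a) - α * D η μ := by
      rw [hY, hD, KLdiv, Finset.mul_sum, ← Finset.sum_sub_distrib]
      refine Finset.sum_congr rfl (fun a _ => ?_)
      rw [hy, hy, Real.log_div (hp η a).ne' (hp μ a).ne']
      ring
    have hYμ : Y μ = ∑ a, p μ a * y μ a := hY μ
    have hsplit : Y μ - Y η = (∑ a, (p μ a - p η a) * y μ a) + α * D η μ := by
      have hs : ∑ a, (p μ a - p η a) * y μ a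
          = (∑ a, p μ a * y μ a) - ∑ a, p η a * y μ a := by
        rw [← Finset.sum_sub_distrib]
        exact Finset.sum_congr rfl (fun a _ => by ring)
      rw [hYμ, hYη, hs]
      ring
    have habs1 : |∑ a, (p μ a - p η a) * y μ a| ≤ M μ * ∑ a, |p η a - p μ a| := by
      calc |∑ a, (p μ a - p η a) * y μ a| ≤ ∑ a, |(p μ a - p η a) * y μ a| :=
            Finset.abs_sum_le_sum_abs _ _
        _ ≤ ∑ a, M μ * |p η a - p μ a| := by
            refine Finset.sum_le_sum (fun a _ => ?_)
            rw [abs_mul]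
            rw [show |p μ a - p η a| = |p η a - p μ a| from abs_sub_comm _ _]
            calc |p η a - p μ a| * |y μ a| ≤ |p η a - p μ a| * M μ :=
                  mul_le_mul_of_nonneg_left (hMabs μ a) (abs_nonneg _)
              _ = M μ * |p η a - p μ a| := mul_comm _ _
        _ = M μ * ∑ a, |p η a - p μ a| := by rw [Finset.mul_sum]
    have hl1 : ∑ a, |p η a - p μ a| ≤ Real.sqrt (2 * D η μ) := by
      rw [hD]
      exact aux_l1_le_sqrt _ _ (hp η) (hp μ) (hpsum η) (hpsum μ)
    calc |Y μ - Y η| = |(∑ a, (p μ a - p η a) * y μ a) + α * D η μ| := by rw [hsplit]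
      _ ≤ |∑ a, (p μ a - p η a) * y μ a| + |α * D η μ| := abs_add_le _ _
      _ = |∑ a, (p μ a - p η a) * y μ a| + α * D η μ := by
          rw [abs_of_nonneg (mul_nonneg hα (hDnn η μ))]
      _ ≤ M μ * Real.sqrt (2 * D η μ) + α * D η μ := by
          have := habs1.trans (mul_le_mul_of_nonneg_left hl1 (hMnn μ))
          linarith
  refine Finset.sum_le_sum (fun μ _ => ?_)
  have hdiff : Y μ - ∑ η, P η * Y η = ∑ η, P η * (Y μ - Y η) := by
    rw [Finset.sum_congr rfl (fun η _ => by rw [mul_sub] : ∀ η ∈ Finset.univ,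
      P η * (Y μ - Y η) = P η * Y μ - P η * Y η), Finset.sum_sub_distrib,
      ← Finset.sum_mul, hPsum, one_mul]
  have habs : |Y μ - ∑ η, P η * Y η|
      ≤ ∑ η, P η * (M μ * Real.sqrt (2 * D η μ) + α * D η μ) := by
    rw [hdiff]
    calc |∑ η, P η * (Y μ - Y η)| ≤ ∑ η, |P η * (Y μ - Y η)| :=
          Finset.abs_sum_le_sum_abs _ _
      _ ≤ ∑ η, P η * (M μ * Real.sqrt (2 * D η μ) + α * D η μ) := by
          refine Finset.sum_le_sum (fun η _ => ?_)
          rw [abs_mul, abs_of_nonneg (hP η)]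
          exact mul_le_mul_of_nonneg_left (hkey μ η) (hP η)
  refine mul_le_mul_of_nonneg_left ?_ (hP μ)
  have hB : 0 ≤ ∑ η, P η * (M μ * Real.sqrt (2 * D η μ) + α * D η μ) :=
    le_trans (abs_nonneg _) habs
  have := abs_le.mp habs
  exact sq_le_sq' this.1 this.2
end

section
/- Let I be a finite nonempty type, let P : I → ℝ satisfy P(i) ≥ 0 for all i and Σ_i P(i) = 1, let λ_i, σ_i ∈ ℝ with σ_i ≥ 0 for each i ∈ I, and let λ ∈ ℝ. Then Σ_i P(i)·σ_i² + Σ_i P(i)·(λ_i − λ)² ≥ Σ_i P(i)²·σ_i² + (Σ_i P(i)·λ_i − λ)². -/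
/-- Appendix C.3: for weights `P` summing to 1, means `λᵢ`,
nonnegative `σᵢ`, and any `λ`,
`∑ᵢ P i·σᵢ² + ∑ᵢ P i·(λᵢ − λ)² ≥ ∑ᵢ P i²·σᵢ² + (∑ᵢ P i·λᵢ − λ)²`. -/
theorem stmt_11 {I : Type*} [Fintype I] [Nonempty I]
    (P : I → ℝ) (hP : ∀ i, 0 ≤ P i) (hPsum : ∑ i, P i = 1)
    (lam : I → ℝ) (sig : I → ℝ) (hsig : ∀ i, 0 ≤ sig i) (l : ℝ) :
    ∑ i, P i * sig i ^ 2 + ∑ i, P i * (lam i - l) ^ 2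
      ≥ ∑ i, P i ^ 2 * sig i ^ 2 + (∑ i, P i * lam i - l) ^ 2 := by
  have hPle : ∀ i, P i ≤ 1 := by
    intro i
    calc P i ≤ ∑ j, P j := Finset.single_le_sum (fun j _ => hP j) (Finset.mem_univ i)
    _ = 1 := hPsum
  have h1 : ∑ i, P i ^ 2 * sig i ^ 2 ≤ ∑ i, P i * sig i ^ 2 := by
    apply Finset.sum_le_sum
    intro i _
    have : P i ^ 2 ≤ P i := by nlinarith [hP i, hPle i]
    nlinarith [sq_nonneg (sig i)]
  have h2 : (∑ i, P i * lam i - l) ^ 2 ≤ ∑ i, P i * (lam i - l) ^ 2 := by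
    have hrw : ∑ i, P i * lam i - l = ∑ i, (Real.sqrt (P i)) * (Real.sqrt (P i) * (lam i - l)) := by
      have : ∀ i, Real.sqrt (P i) * (Real.sqrt (P i) * (lam i - l)) = P i * (lam i - l) := by
        intro i
        rw [← mul_assoc, Real.mul_self_sqrt (hP i)]
      rw [Finset.sum_congr rfl fun i _ => this i]
      simp [Finset.sum_sub_distrib, ← Finset.sum_mul, mul_sub, hPsum]
    rw [hrw]
    calc (∑ i, Real.sqrt (P i) * (Real.sqrt (P i) * (lam i - l))) ^ 2
        ≤ (∑ i, Real.sqrt (P i) ^ 2) * ∑ i, (Real.sqrt (P i) * (lam i - l)) ^ 2 :=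
          Finset.sum_mul_sq_le_sq_mul_sq _ _ _
      _ = ∑ i, P i * (lam i - l) ^ 2 := by
          have : ∑ i, Real.sqrt (P i) ^ 2 = 1 := by
            rw [Finset.sum_congr rfl fun i _ => Real.sq_sqrt (hP i), hPsum]
          rw [this, one_mul]
          apply Finset.sum_congr rfl
          intro i _
          rw [mul_pow, Real.sq_sqrt (hP i)]
  linarith
end
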